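/- arXiv:2311.13362 — 2 statements merged into one kernel-verified Lean document; each statement's English description precedes it below -/
import Mathlib

section
/- The spine inclusion Δ^n_Seg ↪ Δ^n is inner anodyne for every n ≥ 1. -/
open CategoryTheory CategoryTheory.Limits Simplicial SSet

universe w v u

namespace Stmt12

variable {C : Type u} [Category.{v} C]

/-- A class of morphisms is stable under retracts if any retract (in the arrow
category) of a morphism in the class is again in the class. -/
def StableUnderRetracts (P : MorphismProperty C) : Prop :=
  ∀ ⦃X Y X' Y' : C⦄ (f : X ⟶ Y) (g : X' ⟶ Y')
    (iX : X ⟶ X') (iY : Y ⟶ Y') (rX : X' ⟶ X) (rY : Y' ⟶ Y),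
    iX ≫ rX = 𝟙 X → iY ≫ rY = 𝟙 Y →
    iX ≫ g = f ≫ iY → rX ≫ f = g ≫ rY → P g → P f

/-- The restriction of a diagram indexed by a well-ordered type to `{i | i < j}`. -/
def restrictionLT {J : Type w} [Preorder J] (F : J ⥤ C) (j : J) : Set.Iio j ⥤ C :=
  (Monotone.functor (f := fun i : Set.Iio j => (i : J)) (fun _ _ h => h)) ⋙ F

/-- The canonical cocone on the restriction of `F` to `{i | i < j}` with point `F.obj j`. -/
def coconeLT {J : Type w} [Preorder J] (F : J ⥤ C) (j : J) : Cocone (restrictionLT F j) where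
  pt := F.obj j
  ι :=
    { app := fun i => F.map (homOfLE i.2.le)
      naturality := by
        intro i i' h
        dsimp [restrictionLT]
        rw [← F.map_comp, Category.comp_id]
        congr 1 }

/-- A class of morphisms is stable under transfinite composition if, for any diagram
indexed by a well-ordered type which is continuous at limit stages and all of whose
successor maps lie in the class, the map from the first object to the colimit lies in
the class. -/
def StableUnderTransfiniteComposition (P : MorphismProperty C) : Prop :=
  ∀ (J : Type w) [LinearOrder J] [SuccOrder J] [OrderBot J] [WellFoundedLT J]
    (F : J ⥤ C),
    (∀ j : J, ¬IsMax j → P (F.map (homOfLE (Order.le_succ j)))) →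
    (∀ j : J, Order.IsSuccLimit j → Nonempty (IsColimit (coconeLT F j))) →
    ∀ (c : Cocone F), IsColimit c → P (c.ι.app ⊥)

/-- A class of morphisms is weakly saturated if it is stable under cobase change,
retracts and transfinite composition. -/
def WeaklySaturated (P : MorphismProperty C) : Prop :=
  P.IsStableUnderCobaseChange ∧ StableUnderRetracts P ∧
    StableUnderTransfiniteComposition.{w} P

/-- The weakly saturated class generated by a class `S`: the smallest weakly saturated
class containing `S`. -/
def saturation (S : MorphismProperty C) : MorphismProperty C :=
  fun _ _ f => ∀ P : MorphismProperty C, WeaklySaturated.{w} P → S ≤ P → P f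

/-- The inner horn inclusions `Λ[n, i] ⟶ Δ[n]`, `0 < i < n` (closed under isomorphism). -/
def InnerHorns : MorphismProperty SSet.{0} := fun X Y f =>
  ∃ (n : ℕ) (i : Fin (n + 1)) (_ : 0 < (i : ℕ)) (_ : (i : ℕ) < n)
    (eX : X ≅ Λ[n, i]) (eY : Δ[n] ≅ Y),
    f = eX.hom ≫ Λ[n, i].ι ≫ eY.hom

/-- A morphism of simplicial sets is inner anodyne if it lies in the weakly saturated
class generated by the inner horn inclusions. -/
def InnerAnodyne : MorphismProperty SSet.{0} := saturation.{0} InnerHorns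

/-- The spine of `Δ[n]`: the simplicial subset which is the union of the edges
`{i, i+1}`. -/
def spine (n : ℕ) : SSet.{0} where
  obj m := { α : Δ[n].obj m // ∃ i : Fin n,
    ∀ j, stdSimplex.asOrderHom α j = i.castSucc ∨ stdSimplex.asOrderHom α j = i.succ }
  map f := TypeCat.ofHom fun α => ⟨Δ[n].map f α.1, by
    obtain ⟨i, hi⟩ := α.2
    exact ⟨i, fun j => hi _⟩⟩

/-- The inclusion of the spine into the standard simplex. -/
def spineInclusion (n : ℕ) : spine n ⟶ Δ[n] where
  app m := TypeCat.ofHom fun α => α.1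

-- ### Part 1 : basic closure properties

lemma WS_id {P : MorphismProperty C} (hP : WeaklySaturated.{0} P) (X : C) : P (𝟙 X) := by
  set F := (Functor.const (Fin 1)).obj X with hF
  have hc : ∀ j : Fin 1, ¬IsMax j → P (F.map (homOfLE (Order.le_succ j))) := by
    intro j hj
    exact absurd (fun b _ => le_of_subsingleton) hj
  have hl : ∀ j : Fin 1, Order.IsSuccLimit j → Nonempty (IsColimit (coconeLT F j)) := by
    intro j hj
    exact absurd (fun b _ => le_of_subsingleton) hj.1
  let c : Cocone F := { pt := X, ι := { app := fun _ => 𝟙 X, naturality := by intros; simp [F] } }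
  have hcol : IsColimit c := by
    refine ⟨fun s => s.ι.app ⊥, fun s j => ?_, fun s m hm => ?_⟩
    · have : j = ⊥ := Subsingleton.elim _ _
      subst this
      exact Category.id_comp _
    · exact ((Category.id_comp m).symm.trans (hm ⊥) : _)
  haveI : WellFoundedLT (Fin 1) := inferInstance
  exact hP.2.2 (Fin 1) F hc hl c hcol

lemma WS_iso {P : MorphismProperty C} (hP : WeaklySaturated.{0} P) {X Y : C} (e : X ≅ Y) :
    P e.hom := by
  refine hP.2.1 e.hom (𝟙 X) (𝟙 X) e.inv (𝟙 X) e.hom (by simp) (by simp) (by simp) (by simp)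
    (WS_id hP X)

lemma WS_isIso {P : MorphismProperty C} (hP : WeaklySaturated.{0} P) {X Y : C} (f : X ⟶ Y)
    [IsIso f] : P f :=
  WS_iso hP (asIso f)

private def compSeqObj (X Y Z : C) : ℕ → C
| 0 => X
| 1 => Y
| _ => Z

private def compSeqMap {X Y Z : C} (u : X ⟶ Y) (v : Y ⟶ Z) :
    ∀ n, compSeqObj X Y Z n ⟶ compSeqObj X Y Z (n + 1)
| 0 => u
| 1 => v
| (_+2) => 𝟙 Z

lemma WS_comp {P : MorphismProperty C} (hP : WeaklySaturated.{0} P) {X Y Z : C}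
    (u : X ⟶ Y) (v : Y ⟶ Z) (hu : P u) (hv : P v) : P (u ≫ v) := by
  set F : ℕ ⥤ C := Functor.ofSequence (compSeqMap u v) with hF
  have mapsucc : ∀ n : ℕ, F.map (homOfLE (Nat.le_add_right n 1)) = compSeqMap u v n :=
    fun n => Functor.ofSequence_map_homOfLE_succ _ n
  have mapZ : ∀ (a b : ℕ) (h : a + 2 ≤ b + 2), F.map (homOfLE h) = 𝟙 Z := by
    intro a b
    induction b with
    | zero => intro h
              have ha : a = 0 := by omega
              subst ha
              have : homOfLE h = 𝟙 (2 : ℕ) := rfl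
              rw [this, F.map_id]; rfl
    | succ b ih =>
        intro h
        rcases Nat.lt_or_ge a (b + 1) with hab | hab
        · have h1 : a + 2 ≤ b + 2 := by omega
          have : homOfLE h = homOfLE h1 ≫ homOfLE (Nat.le_add_right (b+2) 1) := rfl
          rw [this, F.map_comp, ih h1, mapsucc (b+2)]
          show 𝟙 Z ≫ 𝟙 Z = 𝟙 Z
          simp
        · have ha : a = b + 1 := by omega
          subst ha
          have : homOfLE h = 𝟙 ((b+3 : ℕ)) := rfl
          rw [this, F.map_id]; rfl
  -- the cocone with vertex Z
  let c : Cocone F :=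
    { pt := Z
      ι := { app := fun n => F.map (homOfLE (Nat.le_add_right n 2))
             naturality := by
               intro i j φ
               have hij : i ≤ j := leOfHom φ
               have hij2 : i + 2 ≤ j + 2 := by omega
               have h1 : φ = homOfLE hij := rfl
               dsimp
               calc F.map φ ≫ F.map (homOfLE (Nat.le_add_right j 2))
                   = F.map (homOfLE hij ≫ homOfLE (Nat.le_add_right j 2)) := by
                      rw [h1, F.map_comp]
                 _ = F.map (homOfLE (Nat.le_add_right i 2) ≫ homOfLE hij2) := rfl
                 _ = F.map (homOfLE (Nat.le_add_right i 2)) ≫ F.map (homOfLE hij2) :=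
                      F.map_comp _ _
                 _ = F.map (homOfLE (Nat.le_add_right i 2)) ≫ 𝟙 (F.obj (j + 2)) := by rw [mapZ i j hij2]; rfl
                 _ = F.map (homOfLE (Nat.le_add_right i 2)) ≫ 𝟙 (F.obj (j + 2)) := rfl } }
  have hstable : ∀ (s : Cocone F) (m : ℕ), s.ι.app (m + 2) = s.ι.app 2 := by
    intro s m
    induction m with
    | zero => rfl
    | succ m ih =>
        have hw := s.w (homOfLE (Nat.le_add_right (m+2) 1))
        rw [mapZ m (m+1) (by omega)] at hw
        have h3 : s.ι.app (m+2+1) = s.ι.app (m+2) :=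
          ((Category.id_comp (s.ι.app (m+2+1))).symm.trans hw : _)
        show s.ι.app (m+2+1) = s.ι.app 2
        rw [h3]
        exact ih
  have hcol : IsColimit c := by
    refine ⟨fun s => s.ι.app 2, fun s j => ?_, fun s m hm => ?_⟩
    · rw [← hstable s j]
      exact s.w (homOfLE (Nat.le_add_right j 2))
    · have h2 : c.ι.app 2 ≫ m = s.ι.app 2 := hm 2
      have hid : c.ι.app 2 ≫ m = m := by
        have : c.ι.app 2 = 𝟙 Z := mapZ 0 2 (by omega)
        exact (this ▸ rfl : c.ι.app 2 ≫ m = 𝟙 Z ≫ m).trans (Category.id_comp m)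
      exact (hid.symm.trans h2 : _)
  have hc : ∀ j : ℕ, ¬IsMax j → P (F.map (homOfLE (Order.le_succ j))) := by
    intro j _
    have : F.map (homOfLE (Order.le_succ j)) = compSeqMap u v j := mapsucc j
    rw [this]
    match j with
    | 0 => exact hu
    | 1 => exact hv
    | (m+2) => exact WS_id hP Z
  have hl : ∀ j : ℕ, Order.IsSuccLimit j → Nonempty (IsColimit (coconeLT F j)) := by
    intro j hj
    exfalso
    match j with
    | 0 => exact hj.1 (fun b _ => Nat.zero_le b)
    | (m+1) => exact hj.2 m ⟨lt_add_one m, fun c hc hc' => by omega⟩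
  have := hP.2.2 ℕ F hc hl c hcol
  have hbot : c.ι.app ⊥ = u ≫ v := by
    show F.map (homOfLE (Nat.le_add_right 0 2)) = u ≫ v
    have : homOfLE (Nat.le_add_right 0 2) =
        homOfLE (Nat.le_add_right 0 1) ≫ homOfLE (Nat.le_add_right 1 1) := rfl
    rw [this, F.map_comp, mapsucc 0, mapsucc 1]
    rfl
  rwa [hbot] at this

/-- The set of vertices hit by a simplex of `Δ[n]`. -/
def rng {n : ℕ} {m : SimplexCategoryᵒᵖ} (α : Δ[n].obj m) : Finset (Fin (n + 1)) :=
  Finset.image (stdSimplex.asOrderHom α) Finset.univ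

lemma mem_rng {n : ℕ} {m : SimplexCategoryᵒᵖ} (α : Δ[n].obj m) (j) :
    stdSimplex.asOrderHom α j ∈ rng α := Finset.mem_image_of_mem _ (Finset.mem_univ j)

lemma rng_subset_iff {n : ℕ} {m : SimplexCategoryᵒᵖ} (α : Δ[n].obj m)
    (S : Finset (Fin (n+1))) : rng α ⊆ S ↔ ∀ j, stdSimplex.asOrderHom α j ∈ S := by
  constructor
  · intro h j; exact h (mem_rng α j)
  · intro h x hx
    obtain ⟨j, _, rfl⟩ := Finset.mem_image.mp hx
    exact h j

lemma asOrderHom_map {n : ℕ} {m₁ m₂ : SimplexCategoryᵒᵖ} (f : m₁ ⟶ m₂) (α : Δ[n].obj m₁)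
    (j) : stdSimplex.asOrderHom (Δ[n].map f α) j = stdSimplex.asOrderHom α (f.unop.toOrderHom j) := rfl

lemma rng_map_subset {n : ℕ} {m₁ m₂ : SimplexCategoryᵒᵖ} (f : m₁ ⟶ m₂) (α : Δ[n].obj m₁) :
    rng (Δ[n].map f α) ⊆ rng α := by
  rw [rng_subset_iff]
  intro j
  rw [asOrderHom_map]
  exact mem_rng α _

/-- extensionality for simplices of the standard simplex -/
lemma stdExt {n : ℕ} {m : SimplexCategoryᵒᵖ} (α β : Δ[n].obj m)
    (h : ∀ j, stdSimplex.asOrderHom α j = stdSimplex.asOrderHom β j) : α = β := by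
  apply ULift.ext
  apply SimplexCategory.Hom.ext
  exact OrderHom.ext _ _ (funext h)

/-- The subcomplex of `Δ[n]` of simplices whose vertex set is contained in a member
of `G`. -/
def Sub {n : ℕ} (G : Set (Finset (Fin (n + 1)))) : SSet.{0} where
  obj m := { α : Δ[n].obj m // ∃ S ∈ G, rng α ⊆ S }
  map f := TypeCat.ofHom fun α => ⟨Δ[n].map f α.1, by
    obtain ⟨S, hS, h⟩ := α.2
    exact ⟨S, hS, (rng_map_subset f α.1).trans h⟩⟩
  map_id m := by
    ext α : 3
    apply Subtype.ext
    exact types_congr_hom (Δ[n].map_id m) α.1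
  map_comp f g := by
    ext α : 3
    apply Subtype.ext
    exact types_congr_hom (Δ[n].map_comp f g) α.1

def SubIncl {n : ℕ} (G : Set (Finset (Fin (n + 1)))) : Sub G ⟶ Δ[n] where
  app m := TypeCat.ofHom fun α => α.1

def SubHom {n : ℕ} {G G' : Set (Finset (Fin (n + 1)))} (h : G ⊆ G') : Sub G ⟶ Sub G' where
  app m := TypeCat.ofHom fun α => ⟨α.1, by obtain ⟨S, hS, hr⟩ := α.2; exact ⟨S, h hS, hr⟩⟩

lemma SubHom_SubIncl {n : ℕ} {G G' : Set (Finset (Fin (n + 1)))} (h : G ⊆ G') :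
    SubHom h ≫ SubIncl G' = SubIncl G := rfl

/-- if `univ ∈ G` the inclusion is an isomorphism -/
theorem SubIncl_isIso {n : ℕ} (G : Set (Finset (Fin (n + 1))))
    (h : Finset.univ ∈ G) : IsIso (SubIncl G) := by
  refine ⟨⟨{ app := fun m => TypeCat.ofHom fun α => ⟨α, Finset.univ, h, Finset.subset_univ _⟩ }, ?_, ?_⟩⟩
  · apply NatTrans.ext; funext m; ext α : 3; exact Subtype.ext rfl
  · apply NatTrans.ext; funext m; ext α : 3; rfl


-- ### Part 3 : attaching an inner horn

section Attach

/-- universe-0 standard simplex -/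
abbrev Δ₀ (a : ℕ) : SSet.{0} := SSet.stdSimplex.obj (SimplexCategory.mk a)

open SSet.stdSimplex

variable {n k : ℕ} (S : Finset (Fin (n + 1))) (hS : S.card = k + 1)

/-- the order isomorphism `Fin (k+1) ≃o S` -/
noncomputable def sIso : Fin (k + 1) ≃o {x // x ∈ S} := S.orderIsoOfFin hS

/-- push a simplex of `(Δ₀ k)` forward to `(Δ₀ n)` along `S` -/
noncomputable def toN {m : SimplexCategoryᵒᵖ} (β : (Δ₀ k).obj m) : (Δ₀ n).obj m :=
  objMk ⟨fun i => (sIso S hS (stdSimplex.asOrderHom β i) : Fin (n + 1)),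
    fun i i' h => Subtype.coe_le_coe.mpr ((sIso S hS).monotone ((stdSimplex.asOrderHom β).monotone h))⟩

lemma asOrderHom_toN {m : SimplexCategoryᵒᵖ} (β : (Δ₀ k).obj m) (i) :
    stdSimplex.asOrderHom (toN S hS β) i = (sIso S hS (stdSimplex.asOrderHom β i) : Fin (n + 1)) := rfl

lemma rng_toN_subset {m : SimplexCategoryᵒᵖ} (β : (Δ₀ k).obj m) : rng (toN S hS β) ⊆ S :=
  (rng_subset_iff _ _).mpr fun i => (sIso S hS (stdSimplex.asOrderHom β i)).2

lemma toN_natural {m₁ m₂ : SimplexCategoryᵒᵖ} (f : m₁ ⟶ m₂) (β : (Δ₀ k).obj m₁) :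
    toN S hS ((Δ₀ k).map f β) = (Δ₀ n).map f (toN S hS β) :=
  stdExt _ _ (fun i => rfl)

/-- pull a simplex of `(Δ₀ n)` with vertices in `S` back to `(Δ₀ k)` -/
noncomputable def toK {m : SimplexCategoryᵒᵖ} (α : (Δ₀ n).obj m) (h : rng α ⊆ S) :
    (Δ₀ k).obj m :=
  objMk ⟨fun i => (sIso S hS).symm ⟨stdSimplex.asOrderHom α i, h (mem_rng α i)⟩,
    fun i i' hii' => (sIso S hS).symm.monotone
      (Subtype.mk_le_mk.mpr ((stdSimplex.asOrderHom α).monotone hii'))⟩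

lemma asOrderHom_toK {m : SimplexCategoryᵒᵖ} (α : (Δ₀ n).obj m) (h : rng α ⊆ S) (i) :
    stdSimplex.asOrderHom (toK S hS α h) i = (sIso S hS).symm ⟨stdSimplex.asOrderHom α i, h (mem_rng α i)⟩ := rfl

lemma toN_toK {m : SimplexCategoryᵒᵖ} (α : (Δ₀ n).obj m) (h : rng α ⊆ S) :
    toN S hS (toK S hS α h) = α := by
  apply stdExt
  intro i
  rw [asOrderHom_toN, asOrderHom_toK, OrderIso.apply_symm_apply]

lemma toK_toN {m : SimplexCategoryᵒᵖ} (β : (Δ₀ k).obj m) (h : rng (toN S hS β) ⊆ S) :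
    toK S hS (toN S hS β) h = β := by
  apply stdExt
  intro i
  rw [asOrderHom_toK]
  have : (⟨stdSimplex.asOrderHom (toN S hS β) i, h (mem_rng _ i)⟩ : {x // x ∈ S}) =
      sIso S hS (stdSimplex.asOrderHom β i) := Subtype.ext (asOrderHom_toN S hS β i)
  rw [this, OrderIso.symm_apply_apply]

lemma toK_natural {m₁ m₂ : SimplexCategoryᵒᵖ} (f : m₁ ⟶ m₂) (α : (Δ₀ n).obj m₁)
    (h : rng α ⊆ S) (h' : rng ((Δ₀ n).map f α) ⊆ S) :
    toK S hS ((Δ₀ n).map f α) h' = (Δ₀ k).map f (toK S hS α h) := by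
  apply stdExt
  intro i
  rfl

variable (j : Fin (k + 1))

/-- the vertex of `S` at position `j` -/
noncomputable def pvert : Fin (n + 1) := (sIso S hS j : Fin (n + 1))

/-- if `β` is in the horn then the vertex set of `toN β` is neither `S` nor
`S.erase p` -/
lemma horn_rng_ne {m : SimplexCategoryᵒᵖ} (β : (Δ₀ k).obj m)
    (hβ : Set.range (stdSimplex.asOrderHom β) ∪ {j} ≠ Set.univ) :
    rng (toN S hS β) ≠ S ∧ rng (toN S hS β) ≠ S.erase (pvert S hS j) := by
  obtain ⟨q, hq⟩ := Set.ne_univ_iff_exists_notMem _ |>.mp hβ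
  rw [Set.mem_union, Set.mem_singleton_iff] at hq
  push_neg at hq
  obtain ⟨hqr, hqj⟩ := hq
  have hqS : (sIso S hS q : Fin (n + 1)) ∈ S := (sIso S hS q).2
  have hqV : (sIso S hS q : Fin (n + 1)) ∉ rng (toN S hS β) := by
    intro hmem
    obtain ⟨i, _, hi⟩ := Finset.mem_image.mp hmem
    rw [asOrderHom_toN] at hi
    exact hqr ⟨i, (sIso S hS).injective (Subtype.ext hi.symm) ▸ rfl⟩
  have hqp : (sIso S hS q : Fin (n + 1)) ≠ pvert S hS j := by
    intro hcontra
    exact hqj ((sIso S hS).injective (Subtype.ext hcontra))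
  constructor
  · intro hcontra
    exact hqV (by rw [hcontra]; exact hqS)
  · intro hcontra
    exact hqV (by rw [hcontra]; exact Finset.mem_erase.mpr ⟨hqp, hqS⟩)

/-- conversely, if the vertex set of `α` is neither `S` nor `S.erase p`,
`toK α` lies in the horn -/
lemma toK_mem_horn {m : SimplexCategoryᵒᵖ} (α : (Δ₀ n).obj m) (h : rng α ⊆ S)
    (h1 : rng α ≠ S) (h2 : rng α ≠ S.erase (pvert S hS j)) :
    Set.range (stdSimplex.asOrderHom (toK S hS α h)) ∪ {j} ≠ Set.univ := by
  -- find a vertex of S missed by α, different from p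
  have hex : ∃ q0 ∈ S, q0 ∉ rng α ∧ q0 ≠ pvert S hS j := by
    by_contra hcon
    push_neg at hcon
    have hne : (S \ rng α).Nonempty := by
      rw [Finset.sdiff_nonempty]
      intro hsub
      exact h1 (Finset.Subset.antisymm h hsub)
    obtain ⟨q1, hq1⟩ := hne
    rw [Finset.mem_sdiff] at hq1
    have hq1p : q1 = pvert S hS j := hcon q1 hq1.1 hq1.2
    have hpnot : pvert S hS j ∉ rng α := hq1p ▸ hq1.2
    apply h2
    apply Finset.Subset.antisymm
    · intro x hx
      exact Finset.mem_erase.mpr ⟨fun hxp => hpnot (hxp ▸ hx), h hx⟩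
    · intro x hx
      rw [Finset.mem_erase] at hx
      by_contra hxV
      exact hx.1 (hcon x hx.2 hxV)
  obtain ⟨q0, hq0S, hq0V, hq0p⟩ := hex
  rw [Set.ne_univ_iff_exists_notMem]
  refine ⟨(sIso S hS).symm ⟨q0, hq0S⟩, ?_⟩
  rw [Set.mem_union, Set.mem_singleton_iff]
  push_neg
  constructor
  · rintro ⟨i, hi⟩
    rw [asOrderHom_toK] at hi
    have h4 := (sIso S hS).symm.injective hi
    have h5 : stdSimplex.asOrderHom α i = q0 := congrArg Subtype.val h4
    exact hq0V (h5 ▸ mem_rng α i)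
  · intro hcontra
    apply hq0p
    have : (⟨q0, hq0S⟩ : {x // x ∈ S}) = sIso S hS j := by
      rw [← hcontra, OrderIso.apply_symm_apply]
    exact congrArg Subtype.val this

end Attach

-- ### Part 4 : the pushout square attaching a horn to a subcomplex

section AttachMain

/-- universe-0 horn -/
abbrev Λ₀ (a : ℕ) (i : Fin (a + 1)) : SSet.{0} := (SSet.horn.{0} a i).toSSet

/-- `V` is dominated by a member of `G` -/
def DG {n : ℕ} (G : Set (Finset (Fin (n + 1)))) (V : Finset (Fin (n + 1))) : Prop :=
  ∃ S' ∈ G, V ⊆ S'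

lemma DG_mono {n : ℕ} {G : Set (Finset (Fin (n + 1)))} {V V' : Finset (Fin (n + 1))}
    (h : V' ⊆ V) (hV : DG G V) : DG G V' := by
  obtain ⟨S', hS', hsub⟩ := hV
  exact ⟨S', hS', h.trans hsub⟩

lemma rng_sub_S {n : ℕ} (S : Finset (Fin (n + 1))) {G : Set (Finset (Fin (n + 1)))}
    {m : SimplexCategoryᵒᵖ}
    {α : (Δ₀ n).obj m} (h : ¬ DG G (rng α)) (hα : ∃ S' ∈ insert S G, rng α ⊆ S') :
    rng α ⊆ S := by
  obtain ⟨S', hS', hr⟩ := hα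
  rcases Set.mem_insert_iff.mp hS' with rfl | hg
  · exact hr
  · exact absurd ⟨S', hg, hr⟩ h

variable {n k : ℕ} (S : Finset (Fin (n + 1))) (hS : S.card = k + 1) (j : Fin (k + 1))
  (G : Set (Finset (Fin (n + 1))))
  (h3 : ∀ V, V ⊆ S → V ≠ S → V ≠ S.erase (pvert S hS j) → DG G V)

/-- the top map of the pushout square -/
noncomputable def topMap : Λ₀ k j ⟶ Sub G where
  app m := TypeCat.ofHom fun β => ⟨toN S hS β.1, by
    have hne := horn_rng_ne S hS j β.1 β.2
    exact h3 _ (rng_toN_subset S hS β.1) hne.1 hne.2⟩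
  naturality m₁ m₂ φ := by
    ext β : 3
    exact Subtype.ext (toN_natural S hS φ β.1)

/-- the bottom map of the pushout square -/
noncomputable def botMap : Δ₀ k ⟶ Sub (insert S G) where
  app m := TypeCat.ofHom fun β => ⟨toN S hS β, ⟨S, Set.mem_insert S G, rng_toN_subset S hS β⟩⟩
  naturality m₁ m₂ φ := by
    ext β : 3
    exact Subtype.ext (toN_natural S hS φ β)

lemma attach_comm :
    topMap S hS j G h3 ≫ SubHom (Set.subset_insert S G) =
      Λ[k, j].ι ≫ botMap S hS G := by
  apply NatTrans.ext
  funext m; ext β : 3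
  exact Subtype.ext rfl

/-- the function underlying the descending map out of the pushout -/
noncomputable def descFun (s : PushoutCocone (topMap S hS j G h3) (Λ[k, j].ι))
    (m : SimplexCategoryᵒᵖ) (α : (Sub (insert S G)).obj m) : s.pt.obj m :=
  @dite _ (DG G (rng α.1)) (Classical.propDecidable _)
    (fun h => s.inl.app m ⟨α.1, h⟩)
    (fun h => s.inr.app m (toK S hS α.1 (rng_sub_S S h α.2)))

lemma descFun_pos (s : PushoutCocone (topMap S hS j G h3) (Λ[k, j].ι))
    {m : SimplexCategoryᵒᵖ} (α : (Sub (insert S G)).obj m) (h : DG G (rng α.1)) :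
    descFun S hS j G h3 s m α = s.inl.app m ⟨α.1, h⟩ := dif_pos h

lemma descFun_neg (s : PushoutCocone (topMap S hS j G h3) (Λ[k, j].ι))
    {m : SimplexCategoryᵒᵖ} (α : (Sub (insert S G)).obj m) (h : ¬ DG G (rng α.1)) :
    descFun S hS j G h3 s m α = s.inr.app m (toK S hS α.1 (rng_sub_S S h α.2)) := dif_neg h

/-- inl and inr agree on overlaps -/
lemma bridge (h1 : ¬ DG G S) (h2 : ¬ DG G (S.erase (pvert S hS j)))
    (s : PushoutCocone (topMap S hS j G h3) (Λ[k, j].ι))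
    {m : SimplexCategoryᵒᵖ} (γ : (Δ₀ n).obj m) (hd : DG G (rng γ)) (hsub : rng γ ⊆ S) :
    s.inl.app m ⟨γ, hd⟩ = s.inr.app m (toK S hS γ hsub) := by
  have hne1 : rng γ ≠ S := fun h => h1 (h ▸ hd)
  have hne2 : rng γ ≠ S.erase (pvert S hS j) := fun h => h2 (h ▸ hd)
  have hmem := toK_mem_horn S hS j γ hsub hne1 hne2
  have hc := types_congr_hom (congrArg (fun (t : Λ₀ k j ⟶ s.pt) => t.app m) s.condition)
    ⟨toK S hS γ hsub, hmem⟩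
  calc s.inl.app m ⟨γ, hd⟩
      = s.inl.app m ((topMap S hS j G h3).app m ⟨toK S hS γ hsub, hmem⟩) := by
        exact congrArg _ (Subtype.ext (toN_toK S hS γ hsub).symm)
    _ = s.inr.app m (toK S hS γ hsub) := hc

/-- the descending natural transformation -/
noncomputable def descNat (h1 : ¬ DG G S) (h2 : ¬ DG G (S.erase (pvert S hS j)))
    (s : PushoutCocone (topMap S hS j G h3) (Λ[k, j].ι)) :
    Sub (insert S G) ⟶ s.pt where
  app m := TypeCat.ofHom (descFun S hS j G h3 s m)
  naturality m₁ m₂ φ := by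
    ext α : 3
    show descFun S hS j G h3 s m₂ ((Sub (insert S G)).map φ α) =
      s.pt.map φ (descFun S hS j G h3 s m₁ α)
    by_cases hd1 : DG G (rng α.1)
    · have hd2 : DG G (rng ((Sub (insert S G)).map φ α).1) :=
        DG_mono (rng_map_subset φ α.1) hd1
      rw [descFun_pos S hS j G h3 s _ hd2, descFun_pos S hS j G h3 s _ hd1]
      have hnat := NatTrans.naturality_apply s.inl φ ⟨α.1, hd1⟩
      refine Eq.trans ?_ hnat
      exact congrArg _ (Subtype.ext rfl)
    · by_cases hd2 : DG G (rng ((Sub (insert S G)).map φ α).1)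
      · -- bridging case
        rw [descFun_pos S hS j G h3 s _ hd2, descFun_neg S hS j G h3 s _ hd1]
        have hsub1 : rng α.1 ⊆ S := rng_sub_S S hd1 α.2
        have hsub2 : rng ((Sub (insert S G)).map φ α).1 ⊆ S :=
          (rng_map_subset φ α.1).trans hsub1
        rw [bridge S hS j G h3 h1 h2 s _ hd2 hsub2]
        have hK : toK S hS ((Sub (insert S G)).map φ α).1 hsub2 =
            (Δ₀ k).map φ (toK S hS α.1 hsub1) := toK_natural S hS φ α.1 hsub1 _
        rw [hK]
        exact NatTrans.naturality_apply s.inr φ (toK S hS α.1 hsub1)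
      · rw [descFun_neg S hS j G h3 s _ hd2, descFun_neg S hS j G h3 s _ hd1]
        have hK : toK S hS ((Sub (insert S G)).map φ α).1
              (rng_sub_S S hd2 ((Sub (insert S G)).map φ α).2) =
            (Δ₀ k).map φ (toK S hS α.1 (rng_sub_S S hd1 α.2)) :=
          toK_natural S hS φ α.1 _ _
        rw [hK]
        exact NatTrans.naturality_apply s.inr φ (toK S hS α.1 _)

end AttachMain

set_option maxHeartbeats 1000000 in
lemma attach {n k : ℕ} (S : Finset (Fin (n + 1))) (hS : S.card = k + 1) (j : Fin (k + 1))
    (G : Set (Finset (Fin (n + 1))))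
    (h3 : ∀ V, V ⊆ S → V ≠ S → V ≠ S.erase (pvert S hS j) → DG G V)
    {P : MorphismProperty SSet.{0}}
    (h1 : ¬ DG G S) (h2 : ¬ DG G (S.erase (pvert S hS j)))
    (hP : WeaklySaturated.{0} P) (hhorn : P (Λ[k, j].ι)) :
    P (SubHom (Set.subset_insert S G)) := by
  have hcolim : IsColimit (PushoutCocone.mk (SubHom (Set.subset_insert S G))
      (botMap S hS G) (attach_comm S hS j G h3)) := by
    refine PushoutCocone.IsColimit.mk _ (fun s => descNat S hS j G h3 h1 h2 s) ?_ ?_ ?_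
    · -- fac_left
      intro s
      apply NatTrans.ext
      funext m; ext α : 3
      show descFun S hS j G h3 s m ((SubHom (Set.subset_insert S G)).app m α) = s.inl.app m α
      have hd : DG G (rng α.1) := α.2
      rw [descFun_pos S hS j G h3 s _ hd]
      exact congrArg (s.inl.app m) (Subtype.ext rfl)
    · -- fac_right
      intro s
      apply NatTrans.ext
      funext m; ext β : 3
      show descFun S hS j G h3 s m ((botMap S hS G).app m β) = s.inr.app m β
      have hsub : rng (toN S hS β) ⊆ S := rng_toN_subset S hS β
      by_cases hd : DG G (rng (toN S hS β))
      · rw [descFun_pos S hS j G h3 s ((botMap S hS G).app m β) hd]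
        exact (bridge S hS j G h3 h1 h2 s _ hd hsub).trans
          (congrArg (s.inr.app m) (toK_toN S hS β hsub))
      · rw [descFun_neg S hS j G h3 s ((botMap S hS G).app m β) hd]
        exact congrArg (s.inr.app m) (toK_toN S hS β _)
    · -- uniqueness
      intro s mm hl hr
      apply NatTrans.ext
      funext m; ext α : 3
      show mm.app m α = descFun S hS j G h3 s m α
      by_cases hd : DG G (rng α.1)
      · rw [descFun_pos S hS j G h3 s _ hd]
        have e1 : mm.app m α =
            mm.app m ((SubHom (Set.subset_insert S G)).app m ⟨α.1, hd⟩) :=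
          congrArg (mm.app m) (Subtype.ext rfl)
        have e2 := types_congr_hom (congrArg (fun (t : Sub G ⟶ s.pt) => t.app m) hl) ⟨α.1, hd⟩
        exact e1.trans e2
      · rw [descFun_neg S hS j G h3 s _ hd]
        have hsub : rng α.1 ⊆ S := rng_sub_S S hd α.2
        have e1 : mm.app m α = mm.app m ((botMap S hS G).app m (toK S hS α.1 hsub)) :=
          congrArg (mm.app m) (Subtype.ext (toN_toK S hS α.1 hsub).symm)
        have e2 := types_congr_hom (congrArg (fun (t : Δ₀ k ⟶ s.pt) => t.app m) hr)
          (toK S hS α.1 hsub)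
        exact e1.trans e2
  have hpo : IsPushout (topMap S hS j G h3) (Λ[k, j].ι)
      (SubHom (Set.subset_insert S G)) (botMap S hS G) :=
    IsPushout.of_isColimit hcolim
  exact hP.1.of_isPushout hpo hhorn

-- ### Part 5 : the combinatorial filtration

section Combinatorics

variable {n : ℕ}

/-- the edge `{i, i+1}` -/
def edgeSet (i : Fin n) : Finset (Fin (n + 1)) := {i.castSucc, i.succ}

/-- spine generators -/
def Gspine (n : ℕ) : Set (Finset (Fin (n + 1))) := {E | ∃ i : Fin n, E = edgeSet i}

/-- filler subsets: `max - 1 ∈ S` and `|S| ≥ 3` -/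
def IsFiller (S : Finset (Fin (n + 1))) : Prop :=
  3 ≤ S.card ∧ ∃ a b : Fin (n + 1), a ∈ S ∧ b ∈ S ∧ (a : ℕ) + 1 = (b : ℕ) ∧ ∀ c ∈ S, c ≤ b

/-- the ordering key -/
noncomputable def key (S : Finset (Fin (n + 1))) : ℕ := ((S.sup id : Fin (n + 1)) : ℕ) * (n + 2) + S.card

lemma card_le_bound (S : Finset (Fin (n + 1))) : S.card ≤ n + 1 := by
  simpa using Finset.card_le_univ S

lemma le_sup_of_mem {S : Finset (Fin (n + 1))} {x : Fin (n + 1)} (hx : x ∈ S) :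
    x ≤ S.sup id := Finset.le_sup (f := id) hx

lemma sup_eq_of_max {S : Finset (Fin (n + 1))} {b : Fin (n + 1)} (hb : b ∈ S)
    (hmax : ∀ c ∈ S, c ≤ b) : S.sup id = b :=
  le_antisymm (Finset.sup_le fun c hc => hmax c hc) (le_sup_of_mem hb)

lemma key_mono {S S' : Finset (Fin (n + 1))} (h : S ⊆ S') : key S ≤ key S' := by
  have h0 : S.sup id ≤ S'.sup id := Finset.sup_mono h
  have h1 : ((S.sup id : Fin (n+1)) : ℕ) ≤ ((S'.sup id : Fin (n+1)) : ℕ) := h0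
  have h2 : S.card ≤ S'.card := Finset.card_le_card h
  exact Nat.add_le_add (Nat.mul_le_mul_right _ h1) h2

lemma key_lt_of_sup_lt {S S' : Finset (Fin (n + 1))}
    (h : ((S.sup id : Fin (n+1)) : ℕ) < ((S'.sup id : Fin (n+1)) : ℕ)) : key S < key S' := by
  have hc : S.card ≤ n + 1 := card_le_bound S
  have hstep : (((S.sup id : Fin (n+1)) : ℕ) + 1) * (n + 2) ≤
      ((S'.sup id : Fin (n+1)) : ℕ) * (n + 2) := Nat.mul_le_mul_right _ h
  calc key S = ((S.sup id : Fin (n+1)) : ℕ) * (n + 2) + S.card := rfl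
    _ < ((S.sup id : Fin (n+1)) : ℕ) * (n + 2) + (n + 2) :=
        Nat.add_lt_add_left (by omega) _
    _ = (((S.sup id : Fin (n+1)) : ℕ) + 1) * (n + 2) := by ring
    _ ≤ ((S'.sup id : Fin (n+1)) : ℕ) * (n + 2) := hstep
    _ ≤ key S' := Nat.le_add_right _ _

lemma sup_le_of_key_le {S S' : Finset (Fin (n + 1))} (h : key S' ≤ key S) :
    ((S'.sup id : Fin (n+1)) : ℕ) ≤ ((S.sup id : Fin (n+1)) : ℕ) := by
  by_contra hcon
  push_neg at hcon
  have hlt := key_lt_of_sup_lt (S := S) (S' := S') hcon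
  omega

lemma card_le_of_key_le {S S' : Finset (Fin (n + 1))} (h : key S' ≤ key S)
    (hsup : ((S'.sup id : Fin (n+1)) : ℕ) = ((S.sup id : Fin (n+1)) : ℕ)) :
    S'.card ≤ S.card := by
  have h' : ((S'.sup id : Fin (n+1)) : ℕ) * (n + 2) + S'.card ≤
      ((S.sup id : Fin (n+1)) : ℕ) * (n + 2) + S.card := h
  rw [hsup] at h'
  exact Nat.le_of_add_le_add_left h' 

lemma mem_edgeSet {i : Fin n} {x : Fin (n + 1)} :
    x ∈ edgeSet i ↔ x = i.castSucc ∨ x = i.succ := by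
  simp [edgeSet]

lemma edge_card_le {E : Finset (Fin (n + 1))} {i : Fin n} (h : E ⊆ edgeSet i) : E.card ≤ 2 := by
  refine (Finset.card_le_card h).trans ?_
  apply (Finset.card_insert_le _ _).trans
  simp

/-- elements with consecutive values give an edge -/
lemma consecutive_edge {a b : Fin (n + 1)} (hab : (a : ℕ) + 1 = (b : ℕ)) :
    ∃ i : Fin n, a = i.castSucc ∧ b = i.succ := by
  have hb : (b : ℕ) < n + 1 := b.isLt
  refine ⟨⟨(a : ℕ), by omega⟩, ?_, ?_⟩
  · apply Fin.ext
    simp [Fin.castSucc]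
  · apply Fin.ext
    simp [Fin.succ]
    omega

lemma subset_pair_of_card_le {W : Finset (Fin (n + 1))} {x y : Fin (n + 1)}
    (hx : x ∈ W) (hy : y ∈ W) (hxy : x ≠ y) (hc : W.card ≤ 2) :
    W = {x, y} := by
  have hsub : ({x, y} : Finset (Fin (n+1))) ⊆ W := by
    intro c hc'
    rcases Finset.mem_insert.mp hc' with rfl | hc''
    · exact hx
    · rw [Finset.mem_singleton] at hc''
      exact hc'' ▸ hy
  have hcard2 : ({x, y} : Finset (Fin (n+1))).card = 2 := by
    rw [Finset.card_insert_of_notMem (by simpa using hxy), Finset.card_singleton]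
  exact (Finset.eq_of_subset_of_card_le hsub (by omega)).symm

end Combinatorics

-- ### Part 6 : step lemmas for the filtration

section Steps

variable {n : ℕ}

lemma key_lt_of_sup_eq_card_lt {S S' : Finset (Fin (n + 1))}
    (hsup : S'.sup id = S.sup id) (hc : S'.card < S.card) : key S' < key S := by
  unfold key
  rw [hsup]
  exact Nat.add_lt_add_left hc _

lemma subset_edge_DG {V W : Finset (Fin (n + 1))} {x y : Fin (n + 1)}
    (G : Set (Finset (Fin (n + 1))))
    (hxy : (x : ℕ) + 1 = (y : ℕ)) (hVW : V ⊆ W) (hW : W = {x, y}) :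
    DG (Gspine n ∪ G) V := by
  obtain ⟨i, hxi, hyi⟩ := consecutive_edge hxy
  refine ⟨edgeSet i, Or.inl ⟨i, rfl⟩, ?_⟩
  intro z hz
  have hzW := hVW hz
  rw [hW] at hzW
  rcases Finset.mem_insert.mp hzW with rfl | hz'
  · exact mem_edgeSet.mpr (Or.inl hxi)
  · rw [Finset.mem_singleton] at hz'
    exact mem_edgeSet.mpr (Or.inr (hz' ▸ hyi))

lemma step_h1 {F : Finset (Finset (Fin (n + 1)))} {S : Finset (Fin (n + 1))}
    (hcard : 3 ≤ S.card) (hkeymax : ∀ T ∈ F, key T ≤ key S) :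
    ¬ DG (Gspine n ∪ ↑(F.erase S)) S := by
  rintro ⟨S', hS', hsub⟩
  rw [Set.mem_union] at hS'
  rcases hS' with hS' | hS'
  · obtain ⟨i, rfl⟩ := hS'
    have := edge_card_le hsub
    have := Finset.card_le_card hsub
    omega
  · have hmem : S' ∈ F.erase S := hS'
    have hSF' : S' ∈ F := Finset.mem_of_mem_erase hmem
    have hne : S' ≠ S := Finset.ne_of_mem_erase hmem
    have hk : key S' ≤ key S := hkeymax S' hSF'
    have hk2 : key S ≤ key S' := key_mono hsub
    have l1 := sup_le_of_key_le hk
    have l2 := sup_le_of_key_le hk2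
    have hsup : ((S'.sup id : Fin (n+1)) : ℕ) = ((S.sup id : Fin (n+1)) : ℕ) := by omega
    have hcards : S'.card ≤ S.card := card_le_of_key_le hk hsup
    exact hne (Finset.eq_of_subset_of_card_le hsub hcards).symm

lemma step_h2 {F : Finset (Finset (Fin (n + 1)))} {S : Finset (Fin (n + 1))}
    {a b : Fin (n + 1)}
    (hcard : 3 ≤ S.card) (haS : a ∈ S) (hbS : b ∈ S)
    (hab : (a : ℕ) + 1 = (b : ℕ)) (hmax : ∀ c ∈ S, c ≤ b)
    (hF : ∀ T ∈ F, IsFiller T) (hkeymax : ∀ T ∈ F, key T ≤ key S) :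
    ¬ DG (Gspine n ∪ ↑(F.erase S)) (S.erase a) := by
  have hba : b ≠ a := fun h => by rw [h] at hab; omega
  have hbT : b ∈ S.erase a := Finset.mem_erase.mpr ⟨hba, hbS⟩
  have hcne : ((S.erase a).erase b).Nonempty := by
    rw [← Finset.card_pos, Finset.card_erase_of_mem hbT, Finset.card_erase_of_mem haS]
    omega
  obtain ⟨c, hc⟩ := hcne
  have hcb : c ≠ b := (Finset.mem_erase.mp hc).1
  have hcT : c ∈ S.erase a := (Finset.mem_erase.mp hc).2
  have hca : c ≠ a := (Finset.mem_erase.mp hcT).1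
  have hcS : c ∈ S := (Finset.mem_erase.mp hcT).2
  have hcval : (c : ℕ) < (a : ℕ) := by
    have h1 : (c : ℕ) ≤ (b : ℕ) := hmax c hcS
    have h2 : (c : ℕ) ≠ (b : ℕ) := fun h => hcb (Fin.ext h)
    have h3 : (c : ℕ) ≠ (a : ℕ) := fun h => hca (Fin.ext h)
    omega
  rintro ⟨S', hS', hsub⟩
  rw [Set.mem_union] at hS'
  rcases hS' with hS' | hS'
  · obtain ⟨i, rfl⟩ := hS'
    have hc' := hsub hcT
    have hb' := hsub hbT
    rw [mem_edgeSet] at hc' hb'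
    have hci : (c : ℕ) = (i : ℕ) ∨ (c : ℕ) = (i : ℕ) + 1 := by
      rcases hc' with h | h
      · left; rw [h]; rfl
      · right; rw [h]; rfl
    have hbi : (b : ℕ) = (i : ℕ) ∨ (b : ℕ) = (i : ℕ) + 1 := by
      rcases hb' with h | h
      · left; rw [h]; rfl
      · right; rw [h]; rfl
    omega
  · have hmem : S' ∈ F.erase S := hS'
    have hSF' : S' ∈ F := Finset.mem_of_mem_erase hmem
    have hne : S' ≠ S := Finset.ne_of_mem_erase hmem
    obtain ⟨hc3, a', b', ha', hb', hab', hmax'⟩ := hF S' hSF'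
    have hk : key S' ≤ key S := hkeymax S' hSF'
    have hsupS : S.sup id = b := sup_eq_of_max hbS hmax
    have hsupS' : S'.sup id = b' := sup_eq_of_max hb' hmax'
    have hbb' : (b : ℕ) ≤ (b' : ℕ) := hmax' b (hsub hbT)
    have hb'b : (b' : ℕ) ≤ (b : ℕ) := by
      have := sup_le_of_key_le hk
      rwa [hsupS, hsupS'] at this
    have hbeq : b' = b := Fin.ext (le_antisymm hb'b hbb')
    have hbeqv : (b' : ℕ) = (b : ℕ) := congrArg Fin.val hbeq
    have haeq : a' = a := Fin.ext (by omega)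
    have hSsub : S ⊆ S' := by
      intro x hx
      by_cases hxa : x = a
      · rw [hxa, ← haeq]
        exact ha'
      · exact hsub (Finset.mem_erase.mpr ⟨hxa, hx⟩)
    have hcards : S'.card ≤ S.card := by
      apply card_le_of_key_le hk
      rw [hsupS, hsupS', hbeq]
    exact hne (Finset.eq_of_subset_of_card_le hSsub hcards).symm

lemma step_h3 {F : Finset (Finset (Fin (n + 1)))} {S : Finset (Fin (n + 1))}
    {a b : Fin (n + 1)}
    (hn : 1 ≤ n) (hcard : 3 ≤ S.card) (haS : a ∈ S) (hbS : b ∈ S)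
    (hab : (a : ℕ) + 1 = (b : ℕ)) (hmax : ∀ c ∈ S, c ≤ b)
    (hlow : ∀ T', IsFiller T' → key T' < key S → T' ∈ F) :
    ∀ V, V ⊆ S → V ≠ S → V ≠ S.erase a → DG (Gspine n ∪ ↑(F.erase S)) V := by
  intro V hV hV1 hV2
  have hsupS : S.sup id = b := sup_eq_of_max hbS hmax
  have hfiller_case : ∀ W, IsFiller W → key W < key S → V ⊆ W →
      DG (Gspine n ∪ ↑(F.erase S)) V := by
    intro W hW hkW hVW
    have hWF : W ∈ F := hlow W hW hkW
    have hWne : W ≠ S := fun h => by rw [h] at hkW; omega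
    exact ⟨W, Or.inr (Finset.mem_coe.mpr (Finset.mem_erase.mpr ⟨hWne, hWF⟩)), hVW⟩
  have habne : a ≠ b := fun h => by rw [h] at hab; omega
  by_cases hbV : b ∈ V
  · by_cases haV : a ∈ V
    · by_cases hc2 : V.card ≤ 2
      · exact subset_edge_DG _ hab (subset_refl V) (subset_pair_of_card_le haV hbV habne hc2)
      · refine hfiller_case V ⟨by omega, a, b, haV, hbV, hab, fun c hc => hmax c (hV hc)⟩ ?_
          (subset_refl V)
        apply key_lt_of_sup_eq_card_lt
        · rw [hsupS]
          exact sup_eq_of_max hbV (fun c hc => hmax c (hV hc))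
        · exact Finset.card_lt_card (hV.ssubset_of_ne hV1)
    · have hVT : V ⊆ S.erase a := fun x hx =>
        Finset.mem_erase.mpr ⟨fun h => haV (h ▸ hx), hV hx⟩
      have hWS : insert a V ⊆ S := Finset.insert_subset haS hV
      have hcardW : (insert a V).card < S.card := by
        rw [Finset.card_insert_of_notMem haV]
        have h5 := Finset.card_lt_card (hVT.ssubset_of_ne hV2)
        rw [Finset.card_erase_of_mem haS] at h5
        omega
      by_cases hc2 : (insert a V).card ≤ 2
      · exact subset_edge_DG _ hab (Finset.subset_insert a V)
          (subset_pair_of_card_le (Finset.mem_insert_self a V)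
            (Finset.mem_insert_of_mem hbV) habne hc2)
      · refine hfiller_case (insert a V)
          ⟨by omega, a, b, Finset.mem_insert_self a V, Finset.mem_insert_of_mem hbV, hab,
            fun c hc => hmax c (hWS hc)⟩ ?_ (Finset.subset_insert a V)
        apply key_lt_of_sup_eq_card_lt
        · rw [hsupS]
          exact sup_eq_of_max (Finset.mem_insert_of_mem hbV) (fun c hc => hmax c (hWS hc))
        · exact hcardW
  · rcases Finset.eq_empty_or_nonempty V with rfl | hVne
    · refine ⟨edgeSet ⟨0, by omega⟩, Or.inl ⟨_, rfl⟩, by simp⟩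
    · set N := V.max' hVne with hN
      have hNV : N ∈ V := V.max'_mem hVne
      have hNle : ∀ c ∈ V, c ≤ N := fun c hc => V.le_max' c hc
      have hNS : N ∈ S := hV hNV
      have hNb : (N : ℕ) < (b : ℕ) := by
        have h1 : (N : ℕ) ≤ (b : ℕ) := hmax N hNS
        have h2 : (N : ℕ) ≠ (b : ℕ) := fun h => hbV ((Fin.ext h : N = b) ▸ hNV)
        omega
      by_cases hN0 : (N : ℕ) = 0
      · refine ⟨edgeSet ⟨0, by omega⟩, Or.inl ⟨_, rfl⟩, ?_⟩
        intro x hx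
        have hxN : (x : ℕ) ≤ (N : ℕ) := hNle x hx
        have hx0 : x = Fin.castSucc ⟨0, by omega⟩ := Fin.ext (by
          simp only [Fin.castSucc_mk]
          omega)
        exact mem_edgeSet.mpr (Or.inl hx0)
      · have hNlt : (N : ℕ) < n + 1 := N.isLt
        set Np : Fin (n + 1) := ⟨(N : ℕ) - 1, by omega⟩ with hNp
        have hNpN : (Np : ℕ) + 1 = (N : ℕ) := by
          simp only [hNp]
          omega
        have hNpne : Np ≠ N := fun h => by
          have := congrArg Fin.val h
          simp only [hNp] at this
          omega
        have hNW : N ∈ insert Np V := Finset.mem_insert_of_mem hNV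
        have hNpW : Np ∈ insert Np V := Finset.mem_insert_self Np V
        have hmaxW : ∀ c ∈ insert Np V, c ≤ N := by
          intro c hc
          rcases Finset.mem_insert.mp hc with rfl | hc'
          · show (Np : ℕ) ≤ (N : ℕ)
            omega
          · exact hNle c hc'
        by_cases hc2 : (insert Np V).card ≤ 2
        · exact subset_edge_DG _ hNpN (Finset.subset_insert Np V)
            (subset_pair_of_card_le hNpW hNW hNpne hc2)
        · refine hfiller_case (insert Np V)
            ⟨by omega, Np, N, hNpW, hNW, hNpN, hmaxW⟩ ?_ (Finset.subset_insert Np V)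
          apply key_lt_of_sup_lt
          rw [hsupS, sup_eq_of_max hNW hmaxW]
          exact hNb

end Steps

-- ### Part 7 : the filtration and the main theorem

section Final

variable {n : ℕ}

lemma P_SubHom_congr {G G1 G2 : Set (Finset (Fin (n + 1)))} (h12 : G1 = G2)
    (hA : G ⊆ G1) (hB : G ⊆ G2) {P : MorphismProperty SSet.{0}} (h : P (SubHom hA)) :
    P (SubHom hB) := by
  subst h12
  exact h

lemma SubHom_self {G : Set (Finset (Fin (n + 1)))} :
    SubHom (subset_refl G) = 𝟙 (Sub G) := by
  apply NatTrans.ext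
  funext m; ext α : 3
  exact Subtype.ext rfl

lemma SubHom_comp {G1 G2 G3 : Set (Finset (Fin (n + 1)))} (h12 : G1 ⊆ G2) (h23 : G2 ⊆ G3) :
    SubHom h12 ≫ SubHom h23 = SubHom (h12.trans h23) := by
  apply NatTrans.ext
  funext m; ext α : 3
  exact Subtype.ext rfl

set_option maxHeartbeats 1000000 in
lemma filtration (hn : 1 ≤ n) {P : MorphismProperty SSet.{0}} (hP : WeaklySaturated.{0} P)
    (hle : InnerHorns ≤ P) :
    ∀ (N : ℕ) (F : Finset (Finset (Fin (n + 1)))), F.card = N →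
      (∀ T ∈ F, IsFiller T) →
      (∀ T', IsFiller T' → (∃ T ∈ F, key T' < key T) → T' ∈ F) →
      P (SubHom (Set.subset_union_left : Gspine n ⊆ Gspine n ∪ ↑F)) := by
  intro N
  induction N using Nat.strong_induction_on with
  | _ N ih =>
    intro F hFcard hF hlow
    rcases Finset.eq_empty_or_nonempty F with rfl | hne
    · have he : Gspine n = Gspine n ∪ ↑(∅ : Finset (Finset (Fin (n + 1)))) := by
        simp
      refine P_SubHom_congr he (subset_refl _) _ ?_
      rw [SubHom_self]
      exact WS_id hP _
    · obtain ⟨S, hSF, hkeymax⟩ := Finset.exists_max_image F key hne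
      obtain ⟨hc3, a, b, haS, hbS, hab, hmax⟩ := hF S hSF
      set k := S.card - 1 with hk
      have hSk : S.card = k + 1 := by omega
      set e := sIso S hSk with he
      set j := e.symm ⟨a, haS⟩ with hj
      have hej : e j = ⟨a, haS⟩ := e.apply_symm_apply _
      have hpj : pvert S hSk j = a := by
        show ((e j : { x // x ∈ S }) : Fin (n + 1)) = a
        rw [hej]
      -- a small element of S
      have hexc : ∃ c ∈ S, (c : ℕ) < (a : ℕ) := by
        have hba : b ≠ a := fun h => by rw [h] at hab; omega
        have hbT : b ∈ S.erase a := Finset.mem_erase.mpr ⟨hba, hbS⟩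
        have hcne : ((S.erase a).erase b).Nonempty := by
          rw [← Finset.card_pos, Finset.card_erase_of_mem hbT, Finset.card_erase_of_mem haS]
          omega
        obtain ⟨c, hc⟩ := hcne
        have hcb : c ≠ b := (Finset.mem_erase.mp hc).1
        have hcT : c ∈ S.erase a := (Finset.mem_erase.mp hc).2
        have hca : c ≠ a := (Finset.mem_erase.mp hcT).1
        have hcS : c ∈ S := (Finset.mem_erase.mp hcT).2
        refine ⟨c, hcS, ?_⟩
        have h1 : (c : ℕ) ≤ (b : ℕ) := hmax c hcS
        have h2 : (c : ℕ) ≠ (b : ℕ) := fun h => hcb (Fin.ext h)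
        have h3 : (c : ℕ) ≠ (a : ℕ) := fun h => hca (Fin.ext h)
        omega
      obtain ⟨c, hcS, hcval⟩ := hexc
      have hj0 : 0 < (j : ℕ) := by
        by_contra hcon
        have hjz : j = 0 := by
          apply Fin.ext
          rw [Fin.val_zero]
          omega
        have hmono : e 0 ≤ ⟨c, hcS⟩ := by
          have := e.monotone (Fin.zero_le (e.symm ⟨c, hcS⟩))
          rwa [e.apply_symm_apply] at this
        rw [← hjz, hej] at hmono
        have : (a : ℕ) ≤ (c : ℕ) := hmono
        omega
      have hjk : (j : ℕ) < k := by
        by_contra hcon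
        have hjlast : j = Fin.last k := Fin.ext (by
          have := j.isLt
          simp only [Fin.val_last]
          omega)
        have hmono : ⟨b, hbS⟩ ≤ e (Fin.last k) := by
          have := e.monotone (Fin.le_last (e.symm ⟨b, hbS⟩))
          rwa [e.apply_symm_apply] at this
        rw [← hjlast, hej] at hmono
        have : (b : ℕ) ≤ (a : ℕ) := hmono
        omega
      -- the three conditions
      have h1 : ¬ DG (Gspine n ∪ ↑(F.erase S)) S := step_h1 hc3 hkeymax
      have h2 : ¬ DG (Gspine n ∪ ↑(F.erase S)) (S.erase (pvert S hSk j)) := by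
        rw [hpj]
        exact step_h2 hc3 haS hbS hab hmax hF hkeymax
      have h3 : ∀ V, V ⊆ S → V ≠ S → V ≠ S.erase (pvert S hSk j) →
          DG (Gspine n ∪ ↑(F.erase S)) V := by
        rw [hpj]
        exact step_h3 hn hc3 haS hbS hab hmax
          (fun T' hT' hkT' => hlow T' hT' ⟨S, hSF, hkT'⟩)
      have hhorn : P (Λ[k, j].ι) :=
        hle _ ⟨k, j, hj0, hjk, Iso.refl _, Iso.refl _, by simp⟩
      have hstep := attach S hSk j (Gspine n ∪ ↑(F.erase S)) h3 h1 h2 hP hhorn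
      -- induction hypothesis for the smaller set
      have hcard' : (F.erase S).card < N := by
        rw [Finset.card_erase_of_mem hSF]
        have : 0 < F.card := Finset.card_pos.mpr hne
        omega
      have hIH := ih (F.erase S).card hcard' (F.erase S) rfl
        (fun T hT => hF T (Finset.mem_of_mem_erase hT))
        (by
          intro T' hT' ⟨T, hT, hkT⟩
          have hTF : T ∈ F := Finset.mem_of_mem_erase hT
          have hT'F : T' ∈ F := hlow T' hT' ⟨T, hTF, hkT⟩
          have hT'ne : T' ≠ S := by
            intro hcon
            rw [hcon] at hkT
            exact absurd (hkeymax T hTF) (by omega)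
          exact Finset.mem_erase.mpr ⟨hT'ne, hT'F⟩)
      have hcomp := WS_comp hP _ _ hIH hstep
      rw [SubHom_comp] at hcomp
      refine P_SubHom_congr ?_ _ Set.subset_union_left hcomp
      · -- insert S (Gspine n ∪ F.erase S) = Gspine n ∪ F
        ext T
        simp only [Set.mem_insert_iff, Set.mem_union, Finset.mem_coe, Finset.mem_erase]
        constructor
        · rintro (rfl | hT | ⟨_, hT⟩)
          · exact Or.inr hSF
          · exact Or.inl hT
          · exact Or.inr hT
        · rintro (hT | hT)
          · exact Or.inr (Or.inl hT)
          · by_cases hTS : T = S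
            · exact Or.inl hTS
            · exact Or.inr (Or.inr ⟨hTS, hT⟩)

/-- the isomorphism between the spine and the corresponding subcomplex -/
def spineIso (n : ℕ) : spine n ≅ Sub (Gspine n) where
  hom :=
    { app := fun m => TypeCat.ofHom fun α => ⟨α.1, by
        obtain ⟨i, hi⟩ := α.2
        exact ⟨edgeSet i, ⟨i, rfl⟩, (rng_subset_iff _ _).mpr fun j =>
          mem_edgeSet.mpr (hi j)⟩⟩
      naturality := fun m₁ m₂ φ => by
        ext α : 3
        exact Subtype.ext rfl }
  inv :=
    { app := fun m => TypeCat.ofHom fun α => ⟨α.1, by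
        obtain ⟨S', hS', hr⟩ := α.2
        obtain ⟨i, rfl⟩ := hS'
        exact ⟨i, fun j => mem_edgeSet.mp ((rng_subset_iff _ _).mp hr j)⟩⟩
      naturality := fun m₁ m₂ φ => by
        ext α : 3
        exact Subtype.ext rfl }
  hom_inv_id := by
    apply NatTrans.ext
    funext m; ext α : 3
    exact Subtype.ext rfl
  inv_hom_id := by
    apply NatTrans.ext
    funext m; ext α : 3
    exact Subtype.ext rfl

lemma univ_mem (hn : 1 ≤ n) (Fall : Finset (Finset (Fin (n + 1))))
    (hFall : ∀ T, IsFiller T → T ∈ Fall) :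
    (Finset.univ : Finset (Fin (n + 1))) ∈ Gspine n ∪ ↑Fall := by
  rcases Nat.lt_or_ge n 2 with hn2 | hn2
  · -- n = 1
    have hn1 : n = 1 := by omega
    subst hn1
    left
    refine ⟨⟨0, by omega⟩, ?_⟩
    decide
  · right
    refine hFall _ ⟨?_, ⟨⟨n - 1, by omega⟩, ⟨n, by omega⟩, Finset.mem_univ _,
      Finset.mem_univ _, by simp; omega, fun c _ => ?_⟩⟩
    · simp only [Finset.card_univ, Fintype.card_fin]
      omega
    · show (c : ℕ) ≤ n
      have := c.isLt
      omega

end Final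

theorem stmt12' (n : ℕ) (hn : 1 ≤ n) : InnerAnodyne (spineInclusion n) := by
  intro P hP hle
  classical
  letI : DecidablePred (fun T : Finset (Fin (n + 1)) => IsFiller T) :=
    fun T => Classical.propDecidable _
  set Fall : Finset (Finset (Fin (n + 1))) := Finset.univ.filter (fun T => IsFiller T)
    with hFall
  have hFall1 : ∀ T ∈ Fall, IsFiller T := fun T hT => (Finset.mem_filter.mp hT).2
  have hFall2 : ∀ T, IsFiller T → T ∈ Fall :=
    fun T hT => Finset.mem_filter.mpr ⟨Finset.mem_univ T, hT⟩
  have h0 := filtration hn hP hle Fall.card Fall rfl hFall1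
    (fun T' hT' _ => hFall2 T' hT')
  have huniv := univ_mem hn Fall hFall2
  haveI : IsIso (SubIncl (Gspine n ∪ ↑Fall)) := SubIncl_isIso _ huniv
  have hfac : spineInclusion n = (spineIso n).hom ≫
      (SubHom (Set.subset_union_left : Gspine n ⊆ Gspine n ∪ ↑Fall) ≫
        SubIncl (Gspine n ∪ ↑Fall)) := by
    apply NatTrans.ext
    funext m; ext α : 3
    rfl
  rw [hfac]
  exact WS_comp hP _ _ (WS_iso hP (spineIso n))
    (WS_comp hP _ _ h0 (WS_isIso hP _))

/-- the spine inclusion `Δ[n]_Seg ↪ Δ[n]` is inner anodyne for all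
`n ≥ 1`. -/
theorem stmt12 (n : ℕ) (hn : 1 ≤ n) : InnerAnodyne (spineInclusion n) :=
  stmt12' n hn

end Stmt12
end

section
/- Let L : C ⇄ D : R be an adjunction between monoidal categories where L is a (strong) monoidal functor and R is its lax monoidal right adjoint. Then for any object set X, composition with L and R induces an adjunction L_* ⊣ R_* between the categories of C-enriched categories with object set X and D-enriched categories with object set X. -/
open CategoryTheory MonoidalCategory CategoryTheory.Functor.LaxMonoidal

universe w w' v v' u

namespace Stmt17

variable (V : Type v) [Category.{w} V] [MonoidalCategory V]
variable (V' : Type v') [Category.{w'} V'] [MonoidalCategory V']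

/-- The category of `V`-enriched categories with fixed object type `X`:
objects are `V`-enriched category structures on `X`. -/
structure EnrCat (X : Type u) where
  str : EnrichedCategory V X

variable {V V'} {X : Type u}

/-- Morphisms: identity-on-objects enriched functors, i.e. families of maps of Hom
objects commuting with identities and composition. -/
@[ext]
structure EnrHom (A B : EnrCat V X) where
  app : ∀ x y : X, A.str.Hom x y ⟶ B.str.Hom x y
  id_app : ∀ x, A.str.id x ≫ app x x = B.str.id x := by aesop_cat
  comp_app : ∀ x y z, A.str.comp x y z ≫ app x z =
    (app x y ⊗ₘ app y z) ≫ B.str.comp x y z := by aesop_cat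

attribute [simp] EnrHom.id_app EnrHom.comp_app

instance : Category (EnrCat V X) where
  Hom := EnrHom
  id A := { app := fun _ _ => 𝟙 _ }
  comp {A B C} f g :=
    { app := fun x y => f.app x y ≫ g.app x y
      id_app := by intro x; rw [← Category.assoc, f.id_app, g.id_app]
      comp_app := by
        intro x y z
        rw [← Category.assoc, f.comp_app, Category.assoc, g.comp_app,
          ← Category.assoc, tensorHom_comp_tensorHom] }
  id_comp f := EnrHom.ext (by funext x y; simp)
  comp_id f := EnrHom.ext (by funext x y; simp)
  assoc f g h := EnrHom.ext (by funext x y; simp)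

/-- Transport of an enriched category structure along a lax monoidal functor. -/
def transportStr (F : V ⥤ V') [F.LaxMonoidal] (A : EnrichedCategory V X) :
    EnrichedCategory V' X :=
  letI := A
  inferInstanceAs (EnrichedCategory V' (TransportEnrichment F X))

/-- The functor on enriched categories with fixed object type induced by a lax monoidal
functor, applying it to Hom objects. -/
def transport (F : V ⥤ V') [F.LaxMonoidal] : EnrCat V X ⥤ EnrCat V' X where
  obj A := ⟨transportStr F A.str⟩
  map {A B} f :=
    { app := fun x y => F.map (f.app x y)
      id_app := by
        intro x
        show (ε F ≫ F.map (A.str.id x)) ≫ F.map (f.app x x) = ε F ≫ F.map (B.str.id x)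
        rw [Category.assoc, ← F.map_comp, f.id_app]
      comp_app := by
        intro x y z
        show (μ F _ _ ≫ F.map (A.str.comp x y z)) ≫ F.map (f.app x z) =
          (F.map (f.app x y) ⊗ₘ F.map (f.app y z)) ≫ μ F _ _ ≫ F.map (B.str.comp x y z)
        rw [Category.assoc, ← F.map_comp, f.comp_app, F.map_comp,
          ← Category.assoc, ← Functor.LaxMonoidal.μ_natural, Category.assoc] }
  map_id A := EnrHom.ext (by funext x y; exact F.map_id _)
  map_comp f g := EnrHom.ext (by funext x y; exact F.map_comp _ _)

lemma stmt17_toFun_id {L : V ⥤ V'} [L.Monoidal] {R : V' ⥤ V} [R.LaxMonoidal]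
    (adj : L ⊣ R) [adj.IsMonoidal] {a : V} {b : V'} {ia : 𝟙_ V ⟶ a} {ib : 𝟙_ V' ⟶ b}
    {φ : L.obj a ⟶ b} (h : (ε L ≫ L.map ia) ≫ φ = ib) :
    ia ≫ adj.homEquiv _ _ φ = ε R ≫ R.map ib := by
  rw [Adjunction.homEquiv_unit, ← adj.unit_naturality_assoc,
    ← adj.unit_app_unit_comp_map_η, Category.assoc, ← R.map_comp, ← h]
  simp

lemma stmt17_toFun_comp {L : V ⥤ V'} [L.Monoidal] {R : V' ⥤ V} [R.LaxMonoidal]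
    (adj : L ⊣ R) [adj.IsMonoidal] {a1 a2 a3 : V} {b1 b2 b3 : V'} {ca : a1 ⊗ a2 ⟶ a3}
    {cb : b1 ⊗ b2 ⟶ b3} {φ1 : L.obj a1 ⟶ b1} {φ2 : L.obj a2 ⟶ b2} {φ3 : L.obj a3 ⟶ b3}
    (h : (μ L _ _ ≫ L.map ca) ≫ φ3 = (φ1 ⊗ₘ φ2) ≫ cb) :
    ca ≫ adj.homEquiv _ _ φ3 =
      (adj.homEquiv _ _ φ1 ⊗ₘ adj.homEquiv _ _ φ2) ≫ μ R _ _ ≫ R.map cb := by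
  simp only [Adjunction.homEquiv_unit]
  rw [← adj.unit_naturality_assoc, ← tensorHom_comp_tensorHom, Category.assoc,
    Functor.LaxMonoidal.μ_natural_assoc,
    ← adj.unit_app_tensor_comp_map_δ_assoc, ← R.map_comp, ← R.map_comp,
    ← h]
  simp

lemma stmt17_invFun_id {L : V ⥤ V'} [L.Monoidal] {R : V' ⥤ V} [R.LaxMonoidal]
    (adj : L ⊣ R) [adj.IsMonoidal] {a : V} {b : V'} {ia : 𝟙_ V ⟶ a} {ib : 𝟙_ V' ⟶ b}
    {ψ : a ⟶ R.obj b} (h : ia ≫ ψ = ε R ≫ R.map ib) :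
    (ε L ≫ L.map ia) ≫ (adj.homEquiv _ _).symm ψ = ib := by
  simp only [Adjunction.homEquiv_counit]
  rw [Category.assoc, ← L.map_comp_assoc, h]
  simp only [Functor.map_comp, Category.assoc]
  rw [adj.counit_naturality, adj.map_ε_comp_counit_app_unit_assoc]
  simp

lemma stmt17_invFun_comp {L : V ⥤ V'} [L.Monoidal] {R : V' ⥤ V} [R.LaxMonoidal]
    (adj : L ⊣ R) [adj.IsMonoidal] {a1 a2 a3 : V} {b1 b2 b3 : V'} {ca : a1 ⊗ a2 ⟶ a3}
    {cb : b1 ⊗ b2 ⟶ b3} {ψ1 : a1 ⟶ R.obj b1} {ψ2 : a2 ⟶ R.obj b2} {ψ3 : a3 ⟶ R.obj b3}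
    (h : ca ≫ ψ3 = (ψ1 ⊗ₘ ψ2) ≫ μ R _ _ ≫ R.map cb) :
    (μ L _ _ ≫ L.map ca) ≫ (adj.homEquiv _ _).symm ψ3 =
      ((adj.homEquiv _ _).symm ψ1 ⊗ₘ (adj.homEquiv _ _).symm ψ2) ≫ cb := by
  simp only [Adjunction.homEquiv_counit]
  rw [Category.assoc, ← L.map_comp_assoc, h]
  simp only [Functor.map_comp, Category.assoc]
  rw [adj.counit_naturality, adj.map_μ_comp_counit_app_tensor_assoc]
  erw [← Functor.OplaxMonoidal.δ_natural_assoc L ψ1 ψ2]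
  rw [Functor.Monoidal.μ_δ_assoc, ← tensorHom_comp_tensorHom, Category.assoc]

/-- if `L ⊣ R` is an adjunction of monoidal categories in which `L` is a
strong monoidal functor and `R` is its lax monoidal right adjoint, then for any object
type `X`, composition with `L` and `R` induces an adjunction `L_* ⊣ R_*` between
`V`-enriched and `V'`-enriched categories with object type `X`. -/
theorem stmt17 (L : V ⥤ V') [L.Monoidal] (R : V' ⥤ V) [R.LaxMonoidal]
    (adj : L ⊣ R) [adj.IsMonoidal] :
    Nonempty ((transport (X := X) L) ⊣ (transport (X := X) R)) := by
  refine ⟨Adjunction.mkOfHomEquiv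
    { homEquiv := fun A B =>
        { toFun := fun f =>
            { app := fun x y => adj.homEquiv _ _ (f.app x y)
              id_app := by
                intro x
                have h : (ε L ≫ L.map (A.str.id x)) ≫ f.app x x = B.str.id x :=
                  f.id_app x
                show A.str.id x ≫ adj.homEquiv _ _ (f.app x x) =
                  ε R ≫ R.map (B.str.id x)
                exact stmt17_toFun_id adj h
              comp_app := by
                intro x y z
                have h : (μ L _ _ ≫ L.map (A.str.comp x y z)) ≫ f.app x z =
                    (f.app x y ⊗ₘ f.app y z) ≫ B.str.comp x y z := f.comp_app x y z
                show A.str.comp x y z ≫ adj.homEquiv _ _ (f.app x z) =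
                  (adj.homEquiv _ _ (f.app x y) ⊗ₘ adj.homEquiv _ _ (f.app y z)) ≫
                    μ R _ _ ≫ R.map (B.str.comp x y z)
                exact stmt17_toFun_comp adj h }
          invFun := fun g =>
            { app := fun x y => (adj.homEquiv _ _).symm (g.app x y)
              id_app := by
                intro x
                have h : A.str.id x ≫ g.app x x = ε R ≫ R.map (B.str.id x) :=
                  g.id_app x
                show (ε L ≫ L.map (A.str.id x)) ≫ (adj.homEquiv _ _).symm (g.app x x) =
                  B.str.id x
                exact stmt17_invFun_id adj h
              comp_app := by
                intro x y z
                have h : A.str.comp x y z ≫ g.app x z =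
                    (g.app x y ⊗ₘ g.app y z) ≫ μ R _ _ ≫ R.map (B.str.comp x y z) :=
                  g.comp_app x y z
                show (μ L _ _ ≫ L.map (A.str.comp x y z)) ≫
                    (adj.homEquiv _ _).symm (g.app x z) =
                  ((adj.homEquiv _ _).symm (g.app x y) ⊗ₘ
                    (adj.homEquiv _ _).symm (g.app y z)) ≫ B.str.comp x y z
                exact stmt17_invFun_comp adj h }
          left_inv := fun f => EnrHom.ext (by funext x y; exact (adj.homEquiv _ _).symm_apply_apply _)
          right_inv := fun g => EnrHom.ext (by funext x y; exact (adj.homEquiv _ _).apply_symm_apply _) }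
      homEquiv_naturality_left_symm := fun f g =>
        EnrHom.ext (by funext x y; exact adj.homEquiv_naturality_left_symm _ _)
      homEquiv_naturality_right := fun f g =>
        EnrHom.ext (by funext x y; exact adj.homEquiv_naturality_right _ _) }⟩

end Stmt17
end
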